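/- For every Young diagram λ, the number of off-diagonal cells, #{(i,j) ∈ λ : i ≠ j}, is congruent modulo 2 to Σ_{(i,j)∈λ, i<j} (λ'_j + λ_j) + Σ_{(i,j)∈λ, i>j} (λ_i + λ'_i). Equivalently, ∏_{(i,j)∈λ, i≠j} (−1) = (∏_{(i,j)∈λ, i<j} (−1)^{λ'_j + λ_j}) · (∏_{(i,j)∈λ, i>j} (−1)^{λ_i + λ'_i}). -/
import Mathlib

open scoped BigOperators

/-- The cells of a Young diagram in the paper's 1-indexed coordinates. -/
def pcells (μ : YoungDiagram) : Finset (ℕ × ℕ) :=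
  μ.cells.image (fun p => (p.1 + 1, p.2 + 1))

/-- `prow μ i` is λ_i, the number of cells in the i-th row (1-indexed). -/
def prow (μ : YoungDiagram) (i : ℕ) : ℕ := μ.rowLen (i - 1)

/-- `pcol μ j` is λ'_j, the number of cells in the j-th column (1-indexed). -/
def pcol (μ : YoungDiagram) (j : ℕ) : ℕ := μ.colLen (j - 1)

lemma mem_pcells_row (μ : YoungDiagram) (p : ℕ × ℕ) :
    p ∈ pcells μ ↔ 1 ≤ p.1 ∧ 1 ≤ p.2 ∧ p.2 ≤ prow μ p.1 := by
  unfold pcells prow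
  simp only [Finset.mem_image, YoungDiagram.mem_cells, Prod.ext_iff]
  constructor
  · rintro ⟨⟨a, b⟩, hab, h1, h2⟩
    rw [YoungDiagram.mem_iff_lt_rowLen] at hab
    simp only at h1 h2
    refine ⟨by omega, by omega, ?_⟩
    have : p.1 - 1 = a := by omega
    rw [this]; omega
  · rintro ⟨h1, h2, h3⟩
    refine ⟨(p.1 - 1, p.2 - 1), ?_, by dsimp only; omega⟩
    rw [YoungDiagram.mem_iff_lt_rowLen]
    omega

lemma mem_pcells_col (μ : YoungDiagram) (p : ℕ × ℕ) :
    p ∈ pcells μ ↔ 1 ≤ p.1 ∧ 1 ≤ p.2 ∧ p.1 ≤ pcol μ p.2 := by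
  unfold pcells pcol
  simp only [Finset.mem_image, YoungDiagram.mem_cells, Prod.ext_iff]
  constructor
  · rintro ⟨⟨a, b⟩, hab, h1, h2⟩
    rw [YoungDiagram.mem_iff_lt_colLen] at hab
    simp only at h1 h2
    refine ⟨by omega, by omega, ?_⟩
    have : p.2 - 1 = b := by omega
    rw [this]; omega
  · rintro ⟨h1, h2, h3⟩
    refine ⟨(p.1 - 1, p.2 - 1), ?_, by dsimp only; omega⟩
    rw [YoungDiagram.mem_iff_lt_colLen]
    omega

lemma pcol_lt (μ : YoungDiagram) {k : ℕ} (h : prow μ k < k) : pcol μ k < k := by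
  unfold prow at h
  unfold pcol
  have h1 : (k - 1, k - 1) ∉ μ := by
    rw [YoungDiagram.mem_iff_lt_rowLen]; omega
  rw [YoungDiagram.mem_iff_lt_colLen] at h1
  omega

lemma prow_lt (μ : YoungDiagram) {k : ℕ} (h : pcol μ k < k) : prow μ k < k := by
  unfold pcol at h
  unfold prow
  have h1 : (k - 1, k - 1) ∉ μ := by
    rw [YoungDiagram.mem_iff_lt_colLen]; omega
  rw [YoungDiagram.mem_iff_lt_rowLen] at h1
  omega

/-- The pairing involution on off-diagonal cells. -/
def sig (μ : YoungDiagram) : ℕ × ℕ → ℕ × ℕ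
  | (i, j) =>
    if (j, i) ∈ pcells μ then (j, i)
    else if (prow μ (max i j) + pcol μ (max i j)) % 2 = 1 then (i, j)
    else if i < j then
      (if (i - prow μ j) % 2 = 1 then (i + 1, j) else (i - 1, j))
    else (i, if (j - pcol μ i) % 2 = 1 then j + 1 else j - 1)

lemma sig_spec (μ : YoungDiagram) {p : ℕ × ℕ} (hp : p ∈ pcells μ) (hne : p.1 ≠ p.2) :
    sig μ p ∈ pcells μ ∧ (sig μ p).1 ≠ (sig μ p).2 ∧
    max (sig μ p).1 (sig μ p).2 = max p.1 p.2 ∧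
    sig μ (sig μ p) = p ∧
    ((prow μ (max p.1 p.2) + pcol μ (max p.1 p.2)) % 2 = 0 → sig μ p ≠ p) := by
  obtain ⟨i, j⟩ := p
  dsimp only at hne ⊢
  obtain ⟨hi1, hj1, hrow⟩ := (mem_pcells_row μ (i, j)).mp hp
  have hcol : i ≤ pcol μ j := ((mem_pcells_col μ (i, j)).mp hp).2.2
  dsimp only at hi1 hj1 hrow hcol
  by_cases h1 : (j, i) ∈ pcells μ
  · have e : sig μ (i, j) = (j, i) := by simp [sig, h1]
    have e2 : sig μ (j, i) = (i, j) := by simp [sig, hp]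
    rw [e]
    refine ⟨h1, Ne.symm hne, max_comm _ _, e2, fun _ hc => ?_⟩
    simp only [Prod.mk.injEq] at hc
    omega
  · by_cases h2 : (prow μ (max i j) + pcol μ (max i j)) % 2 = 1
    · have e : sig μ (i, j) = (i, j) := by simp [sig, h1, h2]
      rw [e]
      exact ⟨hp, hne, rfl, by rw [e], fun hpar _ => by omega⟩
    · by_cases h3 : i < j
      · -- above diagonal, unpaired
        have hmax : max i j = j := max_eq_right h3.le
        rw [hmax] at h2
        have hL : prow μ j < i := by
          by_contra hc
          exact h1 ((mem_pcells_row μ (j, i)).mpr ⟨by omega, by omega, by dsimp only; omega⟩)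
        have hU : pcol μ j < j := pcol_lt μ (by omega)
        by_cases h4 : (i - prow μ j) % 2 = 1
        · have e : sig μ (i, j) = (i + 1, j) := by
            simp only [sig]
            rw [if_neg h1, hmax, if_neg h2, if_pos h3, if_pos h4]
          have hiU : i < pcol μ j := by omega
          have hq : (i + 1, j) ∈ pcells μ :=
            (mem_pcells_col μ (i + 1, j)).mpr ⟨by omega, by omega, by dsimp only; omega⟩
          have hq1 : (j, i + 1) ∉ pcells μ := by
            intro hc
            have := ((mem_pcells_row μ (j, i + 1)).mp hc).2.2
            simp only at this; omega
          have e2 : sig μ (i + 1, j) = (i, j) := by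
            simp only [sig]
            have hmax2 : max (i + 1) j = j := by omega
            rw [if_neg hq1, hmax2, if_neg h2, if_pos (by omega : i + 1 < j),
              if_neg (by omega : ¬ (i + 1 - prow μ j) % 2 = 1)]
            congr 1
          rw [e]
          exact ⟨hq, by omega, by dsimp only; omega, e2, fun _ hc => by
            simp only [Prod.mk.injEq] at hc; omega⟩
        · have e : sig μ (i, j) = (i - 1, j) := by
            simp only [sig]
            rw [if_neg h1, hmax, if_neg h2, if_pos h3, if_neg h4]
          have hq : (i - 1, j) ∈ pcells μ :=
            (mem_pcells_col μ (i - 1, j)).mpr ⟨by omega, by omega, by dsimp only; omega⟩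
          have hq1 : (j, i - 1) ∉ pcells μ := by
            intro hc
            have := ((mem_pcells_row μ (j, i - 1)).mp hc).2.2
            simp only at this; omega
          have e2 : sig μ (i - 1, j) = (i, j) := by
            simp only [sig]
            have hmax2 : max (i - 1) j = j := by omega
            rw [if_neg hq1, hmax2, if_neg h2, if_pos (by omega : i - 1 < j),
              if_pos (by omega : (i - 1 - prow μ j) % 2 = 1)]
            congr 1
            all_goals omega
          rw [e]
          exact ⟨hq, by omega, by dsimp only; omega, e2, fun _ hc => by
            simp only [Prod.mk.injEq] at hc; omega⟩
      · -- below diagonal, unpaired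
        have h3' : j < i := by omega
        have hmax : max i j = i := max_eq_left h3'.le
        rw [hmax] at h2
        have hL : pcol μ i < j := by
          by_contra hc
          exact h1 ((mem_pcells_col μ (j, i)).mpr ⟨by omega, by omega, by dsimp only; omega⟩)
        have hU : prow μ i < i := prow_lt μ (by omega)
        by_cases h4 : (j - pcol μ i) % 2 = 1
        · have e : sig μ (i, j) = (i, j + 1) := by
            simp only [sig]
            rw [if_neg h1, hmax, if_neg h2, if_neg h3, if_pos h4]
          have hjU : j < prow μ i := by omega
          have hq : (i, j + 1) ∈ pcells μ :=
            (mem_pcells_row μ (i, j + 1)).mpr ⟨by omega, by omega, by dsimp only; omega⟩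
          have hq1 : (j + 1, i) ∉ pcells μ := by
            intro hc
            have := ((mem_pcells_col μ (j + 1, i)).mp hc).2.2
            simp only at this; omega
          have e2 : sig μ (i, j + 1) = (i, j) := by
            simp only [sig]
            have hmax2 : max i (j + 1) = i := by omega
            rw [if_neg hq1, hmax2, if_neg h2, if_neg (by omega : ¬ i < j + 1),
              if_neg (by omega : ¬ (j + 1 - pcol μ i) % 2 = 1)]
            congr 1
          rw [e]
          exact ⟨hq, by omega, by dsimp only; omega, e2, fun _ hc => by
            simp only [Prod.mk.injEq] at hc; omega⟩
        · have e : sig μ (i, j) = (i, j - 1) := by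
            simp only [sig]
            rw [if_neg h1, hmax, if_neg h2, if_neg h3, if_neg h4]
          have hq : (i, j - 1) ∈ pcells μ :=
            (mem_pcells_row μ (i, j - 1)).mpr ⟨by omega, by omega, by dsimp only; omega⟩
          have hq1 : (j - 1, i) ∉ pcells μ := by
            intro hc
            have := ((mem_pcells_col μ (j - 1, i)).mp hc).2.2
            simp only at this; omega
          have e2 : sig μ (i, j - 1) = (i, j) := by
            simp only [sig]
            have hmax2 : max i (j - 1) = i := by omega
            rw [if_neg hq1, hmax2, if_neg h2, if_neg (by omega : ¬ i < j - 1),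
              if_pos (by omega : (j - 1 - pcol μ i) % 2 = 1)]
            congr 1
            all_goals omega
          rw [e]
          exact ⟨hq, by omega, by dsimp only; omega, e2, fun _ hc => by
            simp only [Prod.mk.injEq] at hc; omega⟩

/-- the number of off-diagonal cells of λ is congruent mod 2 to
Σ_{(i,j)∈λ, i<j} (λ'_j + λ_j) + Σ_{(i,j)∈λ, i>j} (λ_i + λ'_i). -/
theorem stmt5 (μ : YoungDiagram) :
    ((pcells μ).filter (fun p => p.1 ≠ p.2)).card % 2
      = ((∑ p ∈ (pcells μ).filter (fun p => p.1 < p.2), (pcol μ p.2 + prow μ p.2))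
          + ∑ p ∈ (pcells μ).filter (fun p => p.2 < p.1), (prow μ p.1 + pcol μ p.1)) % 2 := by
  classical
  rw [← ZMod.natCast_eq_natCast_iff']
  set F1 := (pcells μ).filter (fun p => p.1 < p.2) with hF1
  set F2 := (pcells μ).filter (fun p => p.2 < p.1) with hF2
  have hsplit : (pcells μ).filter (fun p => p.1 ≠ p.2) = F1 ∪ F2 := by
    ext p
    simp only [hF1, hF2, Finset.mem_union, Finset.mem_filter]
    constructor
    · rintro ⟨h, hne⟩
      rcases Nat.lt_or_ge p.1 p.2 with h' | h'
      · exact Or.inl ⟨h, h'⟩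
      · exact Or.inr ⟨h, by omega⟩
    · rintro (⟨h, h'⟩ | ⟨h, h'⟩) <;> exact ⟨h, by omega⟩
  have hdisj : Disjoint F1 F2 := by
    rw [Finset.disjoint_left]
    intro p hp1 hp2
    rw [hF1, Finset.mem_filter] at hp1
    rw [hF2, Finset.mem_filter] at hp2
    omega
  set f : ℕ × ℕ → ZMod 2 :=
    fun p => ((prow μ (max p.1 p.2) + pcol μ (max p.1 p.2) + 1 : ℕ) : ZMod 2) with hf
  have hmem : ∀ p ∈ F1 ∪ F2, p ∈ pcells μ ∧ p.1 ≠ p.2 := by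
    intro p hp
    rw [← hsplit, Finset.mem_filter] at hp
    exact hp
  have hmain : ∑ p ∈ F1 ∪ F2, f p = 0 := by
    apply Finset.sum_involution (fun p _ => sig μ p)
    · intro p hp
      obtain ⟨hp', hne⟩ := hmem p hp
      obtain ⟨_, _, hmax, _, _⟩ := sig_spec μ hp' hne
      have : f (sig μ p) = f p := by rw [hf]; simp only [hmax]
      rw [this]
      exact CharTwo.add_self_eq_zero _
    · intro p hp hfne
      obtain ⟨hp', hne⟩ := hmem p hp
      obtain ⟨_, _, _, _, hne'⟩ := sig_spec μ hp' hne
      apply hne'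
      by_contra hc
      apply hfne
      rw [hf]
      rw [ZMod.natCast_eq_zero_iff]
      omega
    · intro p hp
      obtain ⟨hp', hne⟩ := hmem p hp
      obtain ⟨hm, hn, _, _, _⟩ := sig_spec μ hp' hne
      rw [← hsplit] at hp ⊢
      rw [Finset.mem_filter]
      exact ⟨hm, hn⟩
    · intro p hp
      obtain ⟨hp', hne⟩ := hmem p hp
      obtain ⟨_, _, _, hinv, _⟩ := sig_spec μ hp' hne
      exact hinv
  rw [Finset.sum_union hdisj] at hmain
  have hc1 : ∑ p ∈ F1, f p
      = ∑ p ∈ F1, ((pcol μ p.2 + prow μ p.2 + 1 : ℕ) : ZMod 2) := by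
    apply Finset.sum_congr rfl
    intro p hp
    rw [hF1, Finset.mem_filter] at hp
    rw [hf]
    simp only [max_eq_right hp.2.le]
    congr 1
    omega
  have hc2 : ∑ p ∈ F2, f p
      = ∑ p ∈ F2, ((prow μ p.1 + pcol μ p.1 + 1 : ℕ) : ZMod 2) := by
    apply Finset.sum_congr rfl
    intro p hp
    rw [hF2, Finset.mem_filter] at hp
    rw [hf]
    simp only [max_eq_left hp.2.le]
  rw [hc1, hc2] at hmain
  push_cast at hmain
  rw [hsplit, Finset.card_union_of_disjoint hdisj]
  push_cast
  have key1 : ∑ p ∈ F1, ((pcol μ p.2 : ZMod 2) + (prow μ p.2 : ZMod 2) + 1)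
      = (∑ p ∈ F1, ((pcol μ p.2 : ZMod 2) + (prow μ p.2 : ZMod 2))) + F1.card := by
    rw [Finset.sum_add_distrib, Finset.sum_const, nsmul_eq_mul, mul_one]
  have key2 : ∑ p ∈ F2, ((prow μ p.1 : ZMod 2) + (pcol μ p.1 : ZMod 2) + 1)
      = (∑ p ∈ F2, ((prow μ p.1 : ZMod 2) + (pcol μ p.1 : ZMod 2))) + F2.card := by
    rw [Finset.sum_add_distrib, Finset.sum_const, nsmul_eq_mul, mul_one]
  have h2 : ((F1.card : ZMod 2) + F2.card)
      = -((∑ p ∈ F1, ((pcol μ p.2 : ZMod 2) + (prow μ p.2 : ZMod 2)))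
          + ∑ p ∈ F2, ((prow μ p.1 : ZMod 2) + (pcol μ p.1 : ZMod 2))) := by
    linear_combination hmain - key1 - key2
  rw [CharTwo.neg_eq] at h2
  exact h2
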